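/- Let A, B, C, D be objects in the derived category of an abelian category and suppose morphisms f : A → C, g : B → C, h : B → D are such that the matrix morphism [[f,g],[0,h]] : A ⊕ B → C ⊕ D is an isomorphism. Then C ≅ A ⊕ Cone(f) and B ≅ Cone(f) ⊕ D, where Cone(f) is the mapping cone of f. -/

import Mathlib

open CategoryTheory Limits Pretriangulated

/-- In the derived category of an abelian category (more generally a
pretriangulated category with biproducts in which the argument applies), if
`f : A ⟶ X`, `g : B ⟶ X`, `h : B ⟶ D` are such that the matrix morphism
`[[f,g],[0,h]] : A ⊞ B ⟶ X ⊞ D` is an isomorphism, then for any cone `Z` of `f`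
(i.e. any distinguished triangle `A ⟶ X ⟶ Z ⟶ A[1]` with first map `f`) one has
`X ≅ A ⊞ Z` and `B ≅ Z ⊞ D`. -/
theorem stmt18 {𝒜 : Type*} [Category 𝒜] [Abelian 𝒜] [HasDerivedCategory 𝒜]
    (A B X D Z : DerivedCategory 𝒜)
    (f : A ⟶ X) (g : B ⟶ X) (h : B ⟶ D)
    (g' : X ⟶ Z) (h' : Z ⟶ A⟦(1 : ℤ)⟧)
    (hT : Triangle.mk f g' h' ∈ distTriang (DerivedCategory 𝒜))
    (hiso : IsIso (biprod.desc (biprod.lift f (0 : A ⟶ D)) (biprod.lift g h))) :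
    Nonempty (X ≅ A ⊞ Z) ∧ Nonempty (B ≅ Z ⊞ D) := by
  set φ : A ⊞ B ⟶ X ⊞ D := biprod.desc (biprod.lift f (0 : A ⟶ D)) (biprod.lift g h) with hφ
  -- basic identity: f ≫ inl = inl ≫ φ
  have key : f ≫ (biprod.inl : X ⟶ X ⊞ D) = (biprod.inl : A ⟶ A ⊞ B) ≫ φ := by
    ext <;> simp [hφ]
  -- f is a split mono
  have hsplit : f ≫ ((biprod.inl : X ⟶ X ⊞ D) ≫ inv φ ≫ biprod.fst) = 𝟙 A := by
    rw [← Category.assoc, key, Category.assoc]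
    simp
  have hmono : Mono f := by
    have : IsSplitMono f := ⟨⟨⟨_, hsplit⟩⟩⟩
    infer_instance
  -- hence the connecting morphism vanishes and the triangle splits
  have h'0 : h' = 0 :=
    Triangle.mor₃_eq_zero_of_mono₁ (T := Triangle.mk f g' h') hT hmono
  obtain ⟨e, he₁, he₂⟩ : ∃ (e : X ≅ A ⊞ Z), f ≫ e.hom = biprod.inl ∧ g' = e.hom ≫ biprod.snd :=
    exists_iso_binaryBiproduct_of_distTriang (Triangle.mk f g' h') hT h'0
  refine ⟨⟨e⟩, ?_⟩
  -- assemble the iso A ⊞ B ≅ A ⊞ (Z ⊞ D)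
  let ψ : A ⊞ B ≅ A ⊞ (Z ⊞ D) :=
    asIso φ ≪≫ biprod.mapIso e (Iso.refl D) ≪≫ biprod.associator A Z D
  have hψ : biprod.inl ≫ ψ.hom ≫ biprod.fst = 𝟙 A := by
    have : (biprod.inl : A ⟶ A ⊞ B) ≫ φ = f ≫ biprod.inl := key.symm
    dsimp [ψ]
    rw [← Category.assoc, ← Category.assoc, this]
    simp [biprod.associator, reassoc_of% he₁]
  have : IsIso (biprod.inl ≫ ψ.hom ≫ biprod.fst) := by
    rw [hψ]; infer_instance
  exact ⟨Biprod.isoElim ψ⟩
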